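/- arXiv:1606.08481 — 2 statements merged into one kernel-verified Lean document; each statement's English description precedes it below -/
import Mathlib

section
/- Define K₁ : (ℝ² × ℝ/ℤ) \ {0} → ℝ by K₁(x) = lim_{N→∞} [ Σ_{n=-N}^{N} 1/(4π|x̃ + (0,0,n)|) - (log N)/(2π) ], where x̃ ∈ ℝ³ is any lift of x. Then this limit exists for every x ≠ 0 and is independent of the choice of lift x̃. -/
open Filter Topology

/-- The third standard basis vector of `ℝ³`. -/
noncomputable def e3 : EuclideanSpace ℝ (Fin 3) := EuclideanSpace.single 2 1

namespace K1aux

noncomputable def g (x : EuclideanSpace ℝ (Fin 3)) (k : ℤ) : ℝ :=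
  1 / (4 * Real.pi * ‖x + (k : ℝ) • e3‖)

lemma norm_e3 : ‖e3‖ = 1 := by
  simp [e3, EuclideanSpace.norm_single]

lemma norm_smul_e3 (c : ℝ) : ‖c • e3‖ = |c| := by
  rw [norm_smul, norm_e3, Real.norm_eq_abs, mul_one]

lemma norm_lb (x : EuclideanSpace ℝ (Fin 3)) (k : ℤ) :
    |(k : ℝ)| - ‖x‖ ≤ ‖x + (k : ℝ) • e3‖ := by
  have h : ‖(k : ℝ) • e3‖ ≤ ‖x + (k : ℝ) • e3‖ + ‖x‖ := by
    calc ‖(k : ℝ) • e3‖ = ‖(x + (k : ℝ) • e3) - x‖ := by congr 1; abel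
    _ ≤ ‖x + (k : ℝ) • e3‖ + ‖x‖ := norm_sub_le _ _
  rw [norm_smul_e3] at h
  linarith

lemma norm_ub (x : EuclideanSpace ℝ (Fin 3)) (k : ℤ) :
    ‖x + (k : ℝ) • e3‖ ≤ |(k : ℝ)| + ‖x‖ := by
  have h := norm_add_le x ((k : ℝ) • e3)
  rw [norm_smul_e3] at h
  linarith

lemma g_nonneg (x : EuclideanSpace ℝ (Fin 3)) (k : ℤ) : 0 ≤ g x k := by
  unfold g; positivity

lemma g_le_bound (x : EuclideanSpace ℝ (Fin 3)) (k : ℤ) (h : ‖x‖ < |(k : ℝ)|) :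
    g x k ≤ 1 / (4 * Real.pi * (|(k : ℝ)| - ‖x‖)) := by
  have h0 : 0 < ‖x + (k : ℝ) • e3‖ := lt_of_lt_of_le (by linarith) (norm_lb x k)
  have hπ := Real.pi_pos
  unfold g
  refine one_div_le_one_div_of_le ?_ ?_
  · exact mul_pos (by positivity) (by linarith)
  · have := norm_lb x k
    nlinarith

lemma g_ge_bound (x : EuclideanSpace ℝ (Fin 3)) (k : ℤ) (h : ‖x‖ < |(k : ℝ)|) :
    1 / (4 * Real.pi * (|(k : ℝ)| + ‖x‖)) ≤ g x k := by
  have h0 : 0 < ‖x + (k : ℝ) • e3‖ := lt_of_lt_of_le (by linarith) (norm_lb x k)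
  have hπ := Real.pi_pos
  unfold g
  refine one_div_le_one_div_of_le ?_ ?_
  · exact mul_pos (by positivity) h0
  · have := norm_ub x k
    nlinarith

lemma g_le_of_big (x : EuclideanSpace ℝ (Fin 3)) (k : ℤ) (c : ℝ)
    (hc : ‖x‖ < c) (h : c ≤ |(k : ℝ)|) :
    g x k ≤ 1 / (4 * Real.pi * (c - ‖x‖)) := by
  have hπ := Real.pi_pos
  refine (g_le_bound x k (lt_of_lt_of_le hc h)).trans ?_
  refine one_div_le_one_div_of_le ?_ ?_
  · exact mul_pos (by positivity) (by linarith)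
  · nlinarith

lemma sum_succ (f : ℤ → ℝ) (N : ℕ) :
    ∑ n ∈ Finset.Icc (-((N : ℤ) + 1)) ((N : ℤ) + 1), f n
      = (∑ n ∈ Finset.Icc (-(N : ℤ)) (N : ℤ), f n) + f ((N : ℤ) + 1) + f (-((N : ℤ) + 1)) := by
  have hset : Finset.Icc (-((N : ℤ) + 1)) ((N : ℤ) + 1)
      = insert (-((N : ℤ) + 1)) (insert ((N : ℤ) + 1) (Finset.Icc (-(N : ℤ)) (N : ℤ))) := by
    ext k
    simp only [Finset.mem_Icc, Finset.mem_insert]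
    omega
  rw [hset, Finset.sum_insert (by simp only [Finset.mem_insert, Finset.mem_Icc]; omega),
    Finset.sum_insert (by simp only [Finset.mem_Icc]; omega)]
  ring

set_option maxHeartbeats 1000000 in
/-- Convergence of the renormalized sum. -/
lemma conv (x : EuclideanSpace ℝ (Fin 3)) :
    ∃ L : ℝ,
      Tendsto (fun N : ℕ =>
        (∑ n ∈ Finset.Icc (-(N : ℤ)) (N : ℤ), g x n) - Real.log N / (2 * Real.pi))
        atTop (𝓝 L) := by
  have hπ := Real.pi_pos
  set R := ‖x‖ with hR
  have hR0 : 0 ≤ R := norm_nonneg x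
  set a : ℕ → ℝ := fun N =>
    (∑ n ∈ Finset.Icc (-(N : ℤ)) (N : ℤ), g x n) - Real.log N / (2 * Real.pi) with ha
  have hd : ∀ i : ℕ, a (i + 1) - a i
      = g x ((i : ℤ) + 1) + g x (-((i : ℤ) + 1))
        - (Real.log ((i : ℝ) + 1) - Real.log i) / (2 * Real.pi) := by
    intro i
    have h1 : ((i + 1 : ℕ) : ℤ) = (i : ℤ) + 1 := by push_cast; ring
    have h2 : ((i + 1 : ℕ) : ℝ) = (i : ℝ) + 1 := by push_cast; ring
    simp only [ha, h1, h2, sum_succ (g x) i]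
    ring
  have hsum : Summable (fun i : ℕ => a (i + 1) - a i) := by
    have hs2 : Summable (fun i : ℕ => 1 / (i : ℝ) ^ 2) :=
      Real.summable_one_div_nat_pow.mpr one_lt_two
    apply summable_of_isBigO_nat hs2
    rw [Asymptotics.isBigO_iff]
    obtain ⟨N₀, hN₀⟩ := exists_nat_ge (2 * R + 2)
    refine ⟨(R + 1) / Real.pi, ?_⟩
    filter_upwards [eventually_ge_atTop (max N₀ 1)] with i hi
    have hi1 : (1 : ℕ) ≤ i := le_trans (le_max_right _ _) hi
    have hiN : N₀ ≤ i := le_trans (le_max_left _ _) hi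
    set r : ℝ := (i : ℝ) with hr
    have hr1 : (1 : ℝ) ≤ r := by rw [hr]; exact_mod_cast hi1
    have hrR : 2 * R + 2 ≤ r := le_trans hN₀ (by rw [hr]; exact_mod_cast hiN)
    set n : ℝ := r + 1 with hn
    have habs1 : |(((i : ℤ) + 1 : ℤ) : ℝ)| = n := by
      push_cast; rw [abs_of_nonneg (by linarith)]
    have habs2 : |((-((i : ℤ) + 1) : ℤ) : ℝ)| = n := by
      push_cast; rw [abs_neg, abs_of_nonneg (by linarith)]
    have hgub1 : g x ((i : ℤ) + 1) ≤ 1 / (4 * Real.pi * (n - R)) := by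
      have := g_le_bound x ((i : ℤ) + 1) (by rw [habs1]; linarith)
      rwa [habs1] at this
    have hgub2 : g x (-((i : ℤ) + 1)) ≤ 1 / (4 * Real.pi * (n - R)) := by
      have := g_le_bound x (-((i : ℤ) + 1)) (by rw [habs2]; linarith)
      rwa [habs2] at this
    have hglb1 : 1 / (4 * Real.pi * (n + R)) ≤ g x ((i : ℤ) + 1) := by
      have := g_ge_bound x ((i : ℤ) + 1) (by rw [habs1]; linarith)
      rwa [habs1] at this
    have hglb2 : 1 / (4 * Real.pi * (n + R)) ≤ g x (-((i : ℤ) + 1)) := by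
      have := g_ge_bound x (-((i : ℤ) + 1)) (by rw [habs2]; linarith)
      rwa [habs2] at this
    have hr0 : (0 : ℝ) < r := by linarith
    have hn0 : (0 : ℝ) < n := by linarith
    have hnR : (0 : ℝ) < n - R := by linarith
    set Δ : ℝ := Real.log ((i : ℝ) + 1) - Real.log i with hΔ
    have hlog_ub : Δ ≤ 1 / r := by
      have h1 : Real.log ((r + 1) / r) ≤ (r + 1) / r - 1 :=
        Real.log_le_sub_one_of_pos (by positivity)
      rw [Real.log_div (by positivity) (by positivity)] at h1
      have h2 : (r + 1) / r - 1 = 1 / r := by field_simp; ring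
      rw [h2] at h1
      exact h1
    have hlog_lb : 1 / n ≤ Δ := by
      have h1 : Real.log (r / (r + 1)) ≤ r / (r + 1) - 1 :=
        Real.log_le_sub_one_of_pos (by positivity)
      rw [Real.log_div (by positivity) (by positivity)] at h1
      have h2 : r / (r + 1) - 1 = -(1 / (r + 1)) := by field_simp; ring
      rw [h2] at h1
      have : 1 / n = 1 / (r + 1) := by rw [hn]
      linarith
    have step1 : 1 / (2 * Real.pi * (n - R)) - 1 / (2 * Real.pi * n)
        ≤ (R + 1) / Real.pi * (1 / r ^ 2) := by
      rw [div_sub_div _ _ (by positivity) (by positivity)]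
      have hrw : (R + 1) / Real.pi * (1 / r ^ 2) = (R + 1) / (Real.pi * r ^ 2) := by
        ring
      rw [hrw, div_le_div_iff₀ (by positivity) (by positivity), hn]
      have hπ2 : 0 < Real.pi ^ 2 := by positivity
      have ht : (0:ℝ) ≤ r - 2*R - 2 := by linarith
      have core1 : 2 * R * r ^ 2 ≤ 4 * (R + 1) * ((r + 1 - R) * (r + 1)) := by
        linarith [ht, hR0, mul_nonneg hR0 hR0, mul_nonneg (mul_nonneg hR0 hR0) ht,
          mul_nonneg hR0 ht, mul_nonneg ht ht, mul_nonneg hR0 (mul_nonneg ht ht)]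
      have hfin := mul_le_mul_of_nonneg_left core1 hπ2.le
      linarith [hfin]
    have step2 : 1 / (2 * Real.pi * r) - 1 / (2 * Real.pi * (n + R))
        ≤ (R + 1) / Real.pi * (1 / r ^ 2) := by
      rw [div_sub_div _ _ (by positivity) (by positivity)]
      have hrw : (R + 1) / Real.pi * (1 / r ^ 2) = (R + 1) / (Real.pi * r ^ 2) := by
        ring
      rw [hrw, div_le_div_iff₀ (by positivity) (by positivity), hn]
      have hπ2 : 0 < Real.pi ^ 2 := by positivity
      have core2 : (R + 1) * r ^ 2 ≤ 2 * (R + 1) * (r * (r + 1 + R)) := by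
        linarith [hR0, hr0.le, mul_nonneg hR0 hr0.le,
          mul_nonneg (mul_nonneg hR0 hr0.le) hr0.le, mul_nonneg hr0.le hr0.le,
          mul_nonneg (mul_nonneg hR0 hR0) hr0.le]
      have hfin := mul_le_mul_of_nonneg_left core2 hπ2.le
      linarith [hfin]
    have hπne : Real.pi ≠ 0 := Real.pi_ne_zero
    have hnRne : n - R ≠ 0 := ne_of_gt hnR
    have hnne : n ≠ 0 := ne_of_gt hn0
    have hrne : r ≠ 0 := ne_of_gt hr0
    have e1 : 1 / (4 * Real.pi * (n - R)) + 1 / (4 * Real.pi * (n - R))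
        = 1 / (2 * Real.pi * (n - R)) := by field_simp; ring
    have e2 : 1 / (4 * Real.pi * (n + R)) + 1 / (4 * Real.pi * (n + R))
        = 1 / (2 * Real.pi * (n + R)) := by
      have : n + R ≠ 0 := by positivity
      field_simp; ring
    have hΔdiv1 : 1 / (2 * Real.pi * n) ≤ Δ / (2 * Real.pi) := by
      have h := (div_le_div_iff_of_pos_right (show (0:ℝ) < 2 * Real.pi by positivity)).mpr hlog_lb
      rwa [div_div, mul_comm n (2 * Real.pi)] at h
    have hΔdiv2 : Δ / (2 * Real.pi) ≤ 1 / (2 * Real.pi * r) := by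
      have h := (div_le_div_iff_of_pos_right (show (0:ℝ) < 2 * Real.pi by positivity)).mpr hlog_ub
      rwa [div_div, mul_comm r (2 * Real.pi)] at h
    rw [hd i, Real.norm_eq_abs, Real.norm_eq_abs, abs_of_nonneg (show (0:ℝ) ≤ 1 / r ^ 2 by positivity)]
    rw [abs_le]
    constructor
    · linarith [step2, hΔdiv2, hglb1, hglb2, e2]
    · linarith [step1, hΔdiv1, hgub1, hgub2, e1]
  obtain ⟨T, hT⟩ := hsum
  have hps : Tendsto (fun N : ℕ => ∑ i ∈ Finset.range N, (a (i + 1) - a i)) atTop (𝓝 T) :=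
    hT.tendsto_sum_nat
  have hEq : ∀ N : ℕ, ∑ i ∈ Finset.range N, (a (i + 1) - a i) = a N - a 0 :=
    fun N => Finset.sum_range_sub a N
  refine ⟨T + a 0, ?_⟩
  have : Tendsto (fun N : ℕ => (a N - a 0) + a 0) atTop (𝓝 (T + a 0)) :=
    ((hps.congr fun N => hEq N).add_const (a 0))
  simpa using this

set_option maxHeartbeats 1000000 in
/-- The shift discrepancy tends to zero. -/
lemma shift_to_zero (x : EuclideanSpace ℝ (Fin 3)) (m : ℤ) :
    Tendsto (fun N : ℕ =>
      (∑ k ∈ Finset.Icc (-(N : ℤ) + m) ((N : ℤ) + m), g x k)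
        - ∑ n ∈ Finset.Icc (-(N : ℤ)) (N : ℤ), g x n) atTop (𝓝 0) := by
  have hπ := Real.pi_pos
  set R := ‖x‖ with hR
  have hR0 : 0 ≤ R := norm_nonneg x
  set M : ℕ := m.natAbs with hM
  obtain ⟨N₁, hN₁⟩ := exists_nat_ge (R + M)
  have hbound : Tendsto (fun N : ℕ => (2 * M : ℝ) * (1 / (4 * Real.pi * (((N : ℝ) - M + 1) - R))))
      atTop (𝓝 0) := by
    have h1 : Tendsto (fun N : ℕ => 4 * Real.pi * (((N : ℝ) - M + 1) - R)) atTop atTop := by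
      apply Tendsto.const_mul_atTop (by positivity)
      have h0 : Tendsto (fun N : ℕ => (N : ℝ) + (-(M : ℝ) + 1 - R)) atTop atTop :=
        tendsto_atTop_add_const_right atTop _ tendsto_natCast_atTop_atTop
      exact h0.congr fun N => by ring
    have h2 := h1.inv_tendsto_atTop
    have h3 : Tendsto (fun N : ℕ => 1 / (4 * Real.pi * (((N : ℝ) - M + 1) - R))) atTop (𝓝 0) := by
      simpa only [one_div, Pi.inv_def, Pi.inv_apply] using h2
    simpa using h3.const_mul (2 * M : ℝ)
  apply squeeze_zero_norm' _ hbound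
  filter_upwards [eventually_ge_atTop (N₁ + M)] with N hN
  set A := Finset.Icc (-(N : ℤ) + m) ((N : ℤ) + m) with hA
  set B := Finset.Icc (-(N : ℤ)) (N : ℤ) with hB
  have hNM : N₁ + M ≤ N := hN
  have hNMr : R + (M : ℝ) ≤ (N : ℝ) := le_trans hN₁ (by exact_mod_cast le_trans (Nat.le_add_right _ _) hN)
  have hcpos : R < (N : ℝ) - M + 1 := by
    push_cast at hNMr ⊢
    linarith
  -- the uniform bound on the boundary terms
  set b : ℝ := 1 / (4 * Real.pi * (((N : ℝ) - M + 1) - R)) with hb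
  have hbden : 0 < 4 * Real.pi * (((N : ℝ) - M + 1) - R) :=
    mul_pos (by positivity) (by linarith)
  have hb0 : 0 ≤ b := by
    rw [hb]
    exact le_of_lt (div_pos one_pos hbden)
  have hbig : ∀ k : ℤ, ((N : ℤ) - M + 1) ≤ (k.natAbs : ℤ) → g x k ≤ b := by
    intro k hk
    rw [hb]
    apply g_le_of_big x k ((N : ℝ) - M + 1) hcpos
    have h1 : ((N : ℤ) - M + 1) ≤ |k| := by rwa [Int.abs_eq_natAbs]
    have h2 : (((N : ℤ) - (M : ℤ) + 1 : ℤ) : ℝ) ≤ |(k : ℝ)| := by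
      rw [← Int.cast_abs]
      exact_mod_cast h1
    push_cast at h2
    linarith
  -- cardinality bounds
  have hcardAB : (A \ B).card ≤ M := by
    have hsub : A \ B ⊆ Finset.Icc ((N : ℤ) + 1) ((N : ℤ) + m) ∪
        Finset.Icc (-(N : ℤ) + m) (-(N : ℤ) - 1) := by
      intro k hk
      simp only [hA, hB, Finset.mem_sdiff, Finset.mem_Icc, Finset.mem_union] at hk ⊢
      omega
    refine le_trans (Finset.card_le_card hsub) ?_
    refine le_trans (Finset.card_union_le _ _) ?_
    simp only [Int.card_Icc]
    omega
  have hcardBA : (B \ A).card ≤ M := by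
    have hsub : B \ A ⊆ Finset.Icc ((N : ℤ) + m + 1) (N : ℤ) ∪
        Finset.Icc (-(N : ℤ)) (-(N : ℤ) + m - 1) := by
      intro k hk
      simp only [hA, hB, Finset.mem_sdiff, Finset.mem_Icc, Finset.mem_union] at hk ⊢
      omega
    refine le_trans (Finset.card_le_card hsub) ?_
    refine le_trans (Finset.card_union_le _ _) ?_
    simp only [Int.card_Icc]
    omega
  have hABbig : ∀ k ∈ A \ B, g x k ≤ b := by
    intro k hk
    apply hbig
    simp only [hA, hB, Finset.mem_sdiff, Finset.mem_Icc] at hk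
    omega
  have hBAbig : ∀ k ∈ B \ A, g x k ≤ b := by
    intro k hk
    apply hbig
    simp only [hA, hB, Finset.mem_sdiff, Finset.mem_Icc] at hk
    omega
  have hsum1 : ∑ k ∈ A \ B, g x k ≤ (M : ℝ) * b := by
    refine le_trans (Finset.sum_le_card_nsmul _ _ b hABbig) ?_
    rw [nsmul_eq_mul]
    exact mul_le_mul_of_nonneg_right (by exact_mod_cast hcardAB) hb0
  have hsum2 : ∑ k ∈ B \ A, g x k ≤ (M : ℝ) * b := by
    refine le_trans (Finset.sum_le_card_nsmul _ _ b hBAbig) ?_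
    rw [nsmul_eq_mul]
    exact mul_le_mul_of_nonneg_right (by exact_mod_cast hcardBA) hb0
  have hps1 : 0 ≤ ∑ k ∈ A \ B, g x k := Finset.sum_nonneg fun k _ => g_nonneg x k
  have hps2 : 0 ≤ ∑ k ∈ B \ A, g x k := Finset.sum_nonneg fun k _ => g_nonneg x k
  have hkey : (∑ k ∈ A, g x k) - ∑ k ∈ B, g x k
      = (∑ k ∈ A \ B, g x k) - ∑ k ∈ B \ A, g x k :=
    (Finset.sum_sdiff_sub_sum_sdiff (s₁ := B) (s₂ := A) (f := g x)).symm
  have hMb : 0 ≤ (M : ℝ) * b := mul_nonneg (by positivity) hb0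
  rw [Real.norm_eq_abs, hkey, abs_le]
  constructor <;> linarith

end K1aux

/-- The renormalized sum `K₁(x) = lim_{N→∞} [Σ_{n=-N}^N 1/(4π|x̃+(0,0,n)|) - log N/(2π)]`
defining the fundamental solution of the Laplacian on `ℝ² × ℝ/ℤ` exists at every nonzero
point and is independent of the choice of lift `x̃`. -/
theorem stmt_8 (x : EuclideanSpace ℝ (Fin 3))
    (hx : ∀ n : ℤ, x + (n : ℝ) • e3 ≠ 0) :
    ∃ L : ℝ,
      Tendsto (fun N : ℕ =>
        (∑ n ∈ Finset.Icc (-(N : ℤ)) (N : ℤ),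
          1 / (4 * Real.pi * ‖x + (n : ℝ) • e3‖)) - Real.log N / (2 * Real.pi))
        atTop (𝓝 L) ∧
      ∀ m : ℤ,
        Tendsto (fun N : ℕ =>
          (∑ n ∈ Finset.Icc (-(N : ℤ)) (N : ℤ),
            1 / (4 * Real.pi * ‖(x + (m : ℝ) • e3) + (n : ℝ) • e3‖))
            - Real.log N / (2 * Real.pi))
          atTop (𝓝 L) := by
  obtain ⟨L, hL⟩ := K1aux.conv x
  refine ⟨L, hL, ?_⟩
  intro m
  have hpt : ∀ n : ℤ, (x + (m : ℝ) • e3) + (n : ℝ) • e3 = x + ((n + m : ℤ) : ℝ) • e3 := by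
    intro n
    push_cast
    rw [add_smul]
    abel
  have hre : ∀ N : ℕ,
      (∑ n ∈ Finset.Icc (-(N : ℤ)) (N : ℤ),
        1 / (4 * Real.pi * ‖(x + (m : ℝ) • e3) + (n : ℝ) • e3‖))
      = ∑ k ∈ Finset.Icc (-(N : ℤ) + m) ((N : ℤ) + m), K1aux.g x k := by
    intro N
    rw [← Finset.map_add_right_Icc, Finset.sum_map]
    apply Finset.sum_congr rfl
    intro n _
    simp only [addRightEmbedding_apply, K1aux.g]
    rw [hpt n]
  have hD := K1aux.shift_to_zero x m
  have := hL.add hD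
  rw [add_zero] at this
  apply this.congr
  intro N
  rw [hre N]
  simp only [K1aux.g]
  ring
end

section
/- With K₁ defined as the renormalized sum K₁(x) = lim_{N→∞} [ Σ_{n=-N}^N 1/(4π|x̃+(0,0,n)|) - (log N)/(2π) ] on (ℝ²×ℝ/ℤ)\{0}, the gradient of K₁ is given by the absolutely convergent series ∇K₁(x) = Σ_{n=-∞}^{∞} -(x̃+(0,0,n))/(4π|x̃+(0,0,n)|³). -/
open Filter Topology

namespace Stmt9

open InnerProductSpace

noncomputable abbrev E3 := EuclideanSpace ℝ (Fin 3)

/-- `kGrad v = -(4π‖v‖³)⁻¹ • v`. -/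
noncomputable def kGrad (v : E3) : E3 := -((4 * Real.pi * ‖v‖ ^ 3)⁻¹ • v)

lemma norm_kGrad (v : E3) : ‖kGrad v‖ = (4 * Real.pi * ‖v‖ ^ 2)⁻¹ := by
  rcases eq_or_ne v 0 with rfl | hv
  · simp [kGrad]
  · have hv' : ‖v‖ ≠ 0 := norm_ne_zero_iff.2 hv
    rw [kGrad, norm_neg, norm_smul, Real.norm_eq_abs, abs_of_nonneg (by positivity)]
    field_simp

lemma hasFDerivAt_kernel (a x : E3) (hx : x + a ≠ 0) :
    HasFDerivAt (fun y : E3 => (4 * Real.pi * ‖y + a‖)⁻¹)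
      (toDual ℝ E3 (kGrad (x + a))) x := by
  have hv : ‖x + a‖ ≠ 0 := norm_ne_zero_iff.2 hx
  have hvpos : (0:ℝ) < ‖x + a‖ := norm_pos_iff.2 hx
  have hpi := Real.pi_pos
  have hN : HasFDerivAt (fun y : E3 => ‖y + a‖ ^ 2) (2 • (innerSL ℝ (x + a))) x := by
    have h := ((hasFDerivAt_id x).add_const a).norm_sq
    simp only [ContinuousLinearMap.comp_id, id_eq] at h
    exact h
  have hsq : Real.sqrt (‖x + a‖ ^ 2) = ‖x + a‖ := Real.sqrt_sq (norm_nonneg _)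
  have h1 : HasDerivAt (fun t : ℝ => 4 * Real.pi * Real.sqrt t)
      (4 * Real.pi * (1 / (2 * Real.sqrt (‖x + a‖ ^ 2)))) (‖x + a‖ ^ 2) :=
    (Real.hasDerivAt_sqrt (by positivity)).const_mul _
  have h2 : HasDerivAt (fun t : ℝ => (4 * Real.pi * Real.sqrt t)⁻¹)
      (-(4 * Real.pi * (1 / (2 * Real.sqrt (‖x + a‖ ^ 2)))) /
        (4 * Real.pi * Real.sqrt (‖x + a‖ ^ 2)) ^ 2) (‖x + a‖ ^ 2) :=
    h1.inv (by rw [hsq]; positivity)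
  have h3 := h2.comp_hasFDerivAt x hN
  have hfun : (fun y : E3 => (4 * Real.pi * ‖y + a‖)⁻¹)
      = (fun t : ℝ => (4 * Real.pi * Real.sqrt t)⁻¹) ∘ (fun y : E3 => ‖y + a‖ ^ 2) := by
    funext y
    simp [Function.comp, Real.sqrt_sq (norm_nonneg _)]
  rw [hfun]
  have hdual : ∀ w : E3, toDual ℝ E3 w = innerSL ℝ w := fun w => by
    ext y; simp
  refine h3.congr_fderiv (Eq.symm ?_)
  rw [← Nat.cast_smul_eq_nsmul ℝ 2 (innerSL ℝ (x + a)), smul_smul, kGrad, map_neg,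
    map_smul, hdual, ← neg_smul]
  congr 1
  rw [hsq]
  field_simp
  ring

/-- The summand with renormalizing constant removed. -/
noncomputable def fAux (n : ℤ) (y : E3) : ℝ :=
  (4 * Real.pi * ‖y + (n : ℝ) • e3‖)⁻¹ - (if n = 0 then 0 else (4 * Real.pi * |(n : ℝ)|)⁻¹)

/-- The renormalizing constants. -/
noncomputable def cAux (n : ℤ) : ℝ := if n = 0 then 0 else (4 * Real.pi * |(n : ℝ)|)⁻¹

/-- The derivative of `fAux n`. -/
noncomputable def f'Aux (n : ℤ) (y : E3) : E3 →L[ℝ] ℝ :=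
  toDual ℝ E3 (kGrad (y + (n : ℝ) • e3))

lemma fAux_add_cAux (n : ℤ) (y : E3) :
    fAux n y + cAux n = 1 / (4 * Real.pi * ‖y + (n : ℝ) • e3‖) := by
  simp [fAux, cAux, one_div]

lemma hasFDerivAt_fAux (n : ℤ) (y : E3) (h : y + (n : ℝ) • e3 ≠ 0) :
    HasFDerivAt (fAux n) (f'Aux n y) y :=
  (hasFDerivAt_kernel ((n : ℝ) • e3) y h).sub_const _

lemma norm_f'Aux (n : ℤ) (y : E3) :
    ‖f'Aux n y‖ = (4 * Real.pi * ‖y + (n : ℝ) • e3‖ ^ 2)⁻¹ := by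
  rw [f'Aux, LinearIsometryEquiv.norm_map, norm_kGrad]

lemma norm_e3 : ‖e3‖ = 1 := by
  rw [e3, EuclideanSpace.norm_single]; norm_num

lemma norm_smul_e3 (n : ℤ) : ‖(n : ℝ) • e3‖ = |(n : ℝ)| := by
  rw [norm_smul, norm_e3, Real.norm_eq_abs, mul_one]

lemma inv_bound {b t : ℝ} (hb : 0 < b) (hs : b ≤ t) :
    (4 * Real.pi * t ^ 2)⁻¹ ≤ (4 * Real.pi * b ^ 2)⁻¹ := by
  have hpi := Real.pi_pos
  have ht : 0 < t := hb.trans_le hs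
  rw [inv_le_inv₀ (by positivity) (by positivity)]
  nlinarith [mul_le_mul hs hs hb.le ht.le]

lemma tendsto_Icc : Tendsto (fun N : ℕ => Finset.Icc (-(N : ℤ)) (N : ℤ)) atTop atTop := by
  apply tendsto_atTop_finset_of_monotone
  · intro i j h
    exact Finset.Icc_subset_Icc (by exact_mod_cast neg_le_neg (Int.ofNat_le.2 h))
      (by exact_mod_cast h)
  · intro n
    exact ⟨n.natAbs, by rw [Finset.mem_Icc]; omega⟩

end Stmt9

open Stmt9 InnerProductSpace

set_option maxHeartbeats 1000000 in
/-- If `K` is the renormalized kernel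
`K(x) = lim_{N→∞} [Σ_{n=-N}^N 1/(4π|x+(0,0,n)|) - log N/(2π)]`, then at any point `x₀`
avoiding the lattice of singularities, the gradient of `K` is given by the absolutely
convergent series `∇K(x₀) = Σ_{n∈ℤ} -(x₀+(0,0,n))/(4π|x₀+(0,0,n)|³)`. -/
theorem stmt_9 (K : EuclideanSpace ℝ (Fin 3) → ℝ)
    (hK : ∀ x : EuclideanSpace ℝ (Fin 3), (∀ n : ℤ, x + (n : ℝ) • e3 ≠ 0) →
      Tendsto (fun N : ℕ =>
        (∑ n ∈ Finset.Icc (-(N : ℤ)) (N : ℤ),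
          1 / (4 * Real.pi * ‖x + (n : ℝ) • e3‖)) - Real.log N / (2 * Real.pi))
        atTop (𝓝 (K x)))
    (x₀ : EuclideanSpace ℝ (Fin 3)) (hx₀ : ∀ n : ℤ, x₀ + (n : ℝ) • e3 ≠ 0) :
    Summable (fun n : ℤ =>
      ‖(4 * Real.pi * ‖x₀ + (n : ℝ) • e3‖ ^ 3)⁻¹ • (x₀ + (n : ℝ) • e3)‖) ∧
    HasGradientAt K
      (∑' n : ℤ, -((4 * Real.pi * ‖x₀ + (n : ℝ) • e3‖ ^ 3)⁻¹ • (x₀ + (n : ℝ) • e3)))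
      x₀ := by
  classical
  have hpi := Real.pi_pos
  set C : ℝ := ‖x₀‖ + 1 with hCdef
  have hC1 : 1 ≤ C := le_add_of_nonneg_left (norm_nonneg _)
  set M : ℕ := ⌈C⌉₊ + 1 with hMdef
  have hMC : C + 1 ≤ (M : ℝ) := by
    have := Nat.le_ceil C
    push_cast [hMdef]
    linarith
  set T : Finset ℤ := Finset.Icc (-(M : ℤ)) (M : ℤ) with hTdef
  have hTne : T.Nonempty := ⟨0, by simp [hTdef]⟩
  set ε : ℝ := T.inf' hTne (fun n => ‖x₀ + (n : ℝ) • e3‖) with hεdef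
  have hε : 0 < ε := by
    rw [hεdef, Finset.lt_inf'_iff]
    exact fun n _ => norm_pos_iff.2 (hx₀ n)
  set r : ℝ := min (ε / 2) 1 with hrdef
  have hr0 : 0 < r := lt_min (by linarith) one_pos
  have hrε : r ≤ ε / 2 := min_le_left _ _
  have hr1 : r ≤ 1 := min_le_right _ _
  set s : Set E3 := Metric.ball x₀ r with hsdef
  have hx₀s : x₀ ∈ s := Metric.mem_ball_self hr0
  -- the lower bound function
  set b : ℤ → ℝ := fun n => if |n| ≤ (M : ℤ) then ε / 2 else |(n : ℝ)| - C with hbdef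
  have habs : ∀ n : ℤ, ¬ (|n| ≤ (M : ℤ)) → (M : ℝ) + 1 ≤ |(n : ℝ)| := by
    intro n hn
    have h1 : (M : ℤ) + 1 ≤ |n| := by
      simp only [Int.abs_eq_natAbs] at hn ⊢; omega
    calc (M : ℝ) + 1 = ((M : ℤ) + 1 : ℤ) := by push_cast; ring
    _ ≤ (|n| : ℤ) := by exact_mod_cast h1
    _ = |(n : ℝ)| := by push_cast; ring
  have hb_pos : ∀ n : ℤ, 0 < b n := by
    intro n
    simp only [hbdef]
    split
    · linarith
    · next hn => have := habs n hn; linarith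
  have hlow : ∀ y ∈ s, ∀ n : ℤ, b n ≤ ‖y + (n : ℝ) • e3‖ := by
    intro y hy n
    have hyx : ‖x₀ - y‖ < r := by
      rw [norm_sub_rev, ← dist_eq_norm]
      exact Metric.mem_ball.1 hy
    simp only [hbdef]
    split
    · next hn =>
      have hmem : n ∈ T := by
        rw [hTdef, Finset.mem_Icc]
        simp only [Int.abs_eq_natAbs] at hn
        omega
      have h1 : ε ≤ ‖x₀ + (n : ℝ) • e3‖ := Finset.inf'_le _ hmem
      have h2 : ‖x₀ + (n : ℝ) • e3‖ - ‖y + (n : ℝ) • e3‖ ≤ ‖x₀ - y‖ := by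
        have := norm_sub_norm_le (x₀ + (n : ℝ) • e3) (y + (n : ℝ) • e3)
        simpa [add_sub_add_right_eq_sub] using this
      linarith
    · next hn =>
      have hyC : ‖y‖ < C := by
        have h3 : ‖y‖ - ‖x₀‖ ≤ ‖y - x₀‖ := norm_sub_norm_le y x₀
        rw [norm_sub_rev] at hyx
        rw [hCdef]
        linarith
      have h4 : ‖(n : ℝ) • e3‖ - ‖y + (n : ℝ) • e3‖ ≤ ‖y‖ := by
        have := norm_sub_norm_le ((n : ℝ) • e3) (y + (n : ℝ) • e3)
        simpa [norm_sub_rev] using this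
      rw [← norm_smul_e3 n]
      linarith
  have hy_ne : ∀ y ∈ s, ∀ n : ℤ, y + (n : ℝ) • e3 ≠ 0 := by
    intro y hy n h0
    have h1 := hlow y hy n
    rw [h0, norm_zero] at h1
    exact absurd h1 (not_le.2 (hb_pos n))
  -- summable bound on derivatives
  set u : ℤ → ℝ := fun n => (4 * Real.pi * (b n) ^ 2)⁻¹ with hudef
  have hbound : ∀ n : ℤ, ∀ y ∈ s, ‖f'Aux n y‖ ≤ u n := by
    intro n y hy
    rw [norm_f'Aux]
    exact inv_bound (hb_pos n) (hlow y hy n)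
  set B : ℕ := M + ⌈2 * C⌉₊ + 1 with hBdef
  have hBprops : ∀ n : ℤ, (B : ℤ) < |n| →
      ¬ (|n| ≤ (M : ℤ)) ∧ 2 * C ≤ |(n : ℝ)| ∧ (1:ℝ) ≤ |(n : ℝ)| := by
    intro n hn
    simp only [Int.abs_eq_natAbs] at hn
    have h1 : ¬ (|n| ≤ (M : ℤ)) := by
      simp only [Int.abs_eq_natAbs]; omega
    refine ⟨h1, ?_, ?_⟩
    · have h2 : ((⌈2 * C⌉₊ : ℤ)) + 1 ≤ |n| := by
        simp only [Int.abs_eq_natAbs]; omega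
      have h3 : (2 : ℝ) * C ≤ (⌈2 * C⌉₊ : ℝ) := Nat.le_ceil _
      calc (2:ℝ) * C ≤ (⌈2 * C⌉₊ : ℝ) := h3
      _ ≤ ((⌈2 * C⌉₊ : ℤ) + 1 : ℤ) := by push_cast; linarith
      _ ≤ (|n| : ℤ) := by exact_mod_cast h2
      _ = |(n : ℝ)| := by push_cast; ring
    · have := habs n h1
      linarith
  have hu : Summable u := by
    have hg : Summable (fun n : ℤ => Real.pi⁻¹ * (1 / (n : ℝ) ^ 2)) :=
      (Real.summable_one_div_int_pow.mpr one_lt_two).mul_left _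
    apply Summable.of_norm_bounded_eventually hg
    rw [Filter.eventually_cofinite]
    apply Set.Finite.subset (Set.finite_Icc (-(B : ℤ)) (B : ℤ))
    intro n hn
    by_contra hB
    apply hn
    rw [Set.mem_Icc] at hB
    have hBn : (B : ℤ) < |n| := by
      simp only [Int.abs_eq_natAbs]; omega
    obtain ⟨h1, h2, h3⟩ := hBprops n hBn
    set t : ℝ := |(n : ℝ)| with htdef
    have hbn : b n = t - C := by simp only [hbdef]; rw [if_neg h1]
    have ht2 : t / 2 ≤ b n := by rw [hbn]; linarith
    have ht0 : 0 < t / 2 := by linarith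
    have key : u n ≤ (4 * Real.pi * (t / 2) ^ 2)⁻¹ := inv_bound ht0 ht2
    have heq : (4 * Real.pi * (t / 2) ^ 2)⁻¹ = Real.pi⁻¹ * (1 / (n : ℝ) ^ 2) := by
      have ht : t ^ 2 = (n : ℝ) ^ 2 := sq_abs _
      have hn0 : (n : ℝ) ≠ 0 := by
        intro h0; rw [htdef, h0] at h3; simp at h3; linarith
      field_simp
      nlinarith [sq_abs (n : ℝ)]
    have hun : 0 ≤ u n := by
      rw [hudef]
      positivity
    rw [Real.norm_eq_abs, abs_of_nonneg hun]
    rw [← heq]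
    exact key
  -- summability of fAux at x₀
  have hf0 : Summable (fun n : ℤ => fAux n x₀) := by
    have hg : Summable (fun n : ℤ => (‖x₀‖ / (2 * Real.pi)) * (1 / (n : ℝ) ^ 2)) :=
      (Real.summable_one_div_int_pow.mpr one_lt_two).mul_left _
    apply Summable.of_norm_bounded_eventually hg
    rw [Filter.eventually_cofinite]
    apply Set.Finite.subset (Set.finite_Icc (-(B : ℤ)) (B : ℤ))
    intro n hn
    by_contra hB
    apply hn
    rw [Set.mem_Icc] at hB
    have hBn : (B : ℤ) < |n| := by
      simp only [Int.abs_eq_natAbs]; omega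
    obtain ⟨h1, h2, h3⟩ := hBprops n hBn
    have hn0 : n ≠ 0 := by rintro rfl; simp at hBn; omega
    set t : ℝ := |(n : ℝ)| with htdef
    have hbn : b n = t - C := by simp only [hbdef]; rw [if_neg h1]
    set sx : ℝ := ‖x₀ + (n : ℝ) • e3‖ with hsxdef
    have hsx1 : t / 2 ≤ sx := by
      have := hlow x₀ hx₀s n
      rw [hbn] at this
      linarith
    have ht0 : (0:ℝ) < t / 2 := by linarith
    have hsx0 : (0:ℝ) < sx := by linarith
    have ht0' : (0:ℝ) < t := by linarith
    have hfval : fAux n x₀ = (4 * Real.pi * sx)⁻¹ - (4 * Real.pi * t)⁻¹ := by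
      rw [fAux, if_neg hn0]
    have hdiff : (4 * Real.pi * sx)⁻¹ - (4 * Real.pi * t)⁻¹ = (t - sx) / (4 * Real.pi * sx * t) := by
      field_simp
    have habs2 : |t - sx| ≤ ‖x₀‖ := by
      have := abs_norm_sub_norm_le ((n : ℝ) • e3) (x₀ + (n : ℝ) • e3)
      simpa [norm_smul_e3, norm_sub_rev] using this
    have hden : (0:ℝ) < 4 * Real.pi * sx * t := mul_pos (mul_pos (by positivity) hsx0) ht0'
    have hden2 : (0:ℝ) < 4 * Real.pi * (t / 2) * t := mul_pos (mul_pos (by positivity) ht0) ht0'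
    have hnorm : ‖fAux n x₀‖ ≤ ‖x₀‖ / (4 * Real.pi * sx * t) := by
      rw [hfval, hdiff, Real.norm_eq_abs, abs_div, abs_of_pos hden]
      exact (div_le_div_iff_of_pos_right hden).mpr habs2
    have hmono : ‖x₀‖ / (4 * Real.pi * sx * t) ≤ ‖x₀‖ / (4 * Real.pi * (t / 2) * t) := by
      apply div_le_div_of_nonneg_left (norm_nonneg _) hden2
      nlinarith
    have heq : ‖x₀‖ / (4 * Real.pi * (t / 2) * t) = (‖x₀‖ / (2 * Real.pi)) * (1 / (n : ℝ) ^ 2) := by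
      rw [← sq_abs (n : ℝ), ← htdef]
      have htne : t ≠ 0 := by linarith
      field_simp
      ring
    calc ‖fAux n x₀‖ ≤ ‖x₀‖ / (4 * Real.pi * sx * t) := hnorm
    _ ≤ ‖x₀‖ / (4 * Real.pi * (t / 2) * t) := hmono
    _ = (‖x₀‖ / (2 * Real.pi)) * (1 / (n : ℝ) ^ 2) := heq
  -- term-by-term differentiation
  have hsOpen : IsOpen s := Metric.isOpen_ball
  have hsPre : IsPreconnected s := (convex_ball x₀ r).isPreconnected
  have hderiv : ∀ n : ℤ, ∀ y ∈ s, HasFDerivAt (fAux n) (f'Aux n y) y :=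
    fun n y hy => hasFDerivAt_fAux n y (hy_ne y hy n)
  have keyDeriv : HasFDerivAt (fun y => ∑' n : ℤ, fAux n y) (∑' n : ℤ, f'Aux n x₀) x₀ :=
    hasFDerivAt_tsum_of_isPreconnected hu hsOpen hsPre hderiv hbound hx₀s hf0 hx₀s
  have hsummf : ∀ y ∈ s, Summable (fAux · y) :=
    fun y hy => summable_of_summable_hasFDerivAt_of_isPreconnected hu hsOpen hsPre
      hderiv hbound hx₀s hf0 hy
  -- identify K with the sum plus a constant on s
  set S : E3 → ℝ := fun y => ∑' n : ℤ, fAux n y with hSdef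
  have hpart : ∀ y : E3, Summable (fAux · y) →
      Tendsto (fun N : ℕ => ∑ n ∈ Finset.Icc (-(N : ℤ)) (N : ℤ), fAux n y) atTop (𝓝 (S y)) :=
    fun y hs' => hs'.hasSum.comp tendsto_Icc
  set D : ℕ → ℝ := fun N =>
    (∑ n ∈ Finset.Icc (-(N : ℤ)) (N : ℤ), cAux n) - Real.log N / (2 * Real.pi) with hDdef
  have hsplit : ∀ (y : E3) (N : ℕ),
      (∑ n ∈ Finset.Icc (-(N : ℤ)) (N : ℤ), 1 / (4 * Real.pi * ‖y + (n : ℝ) • e3‖))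
        - Real.log N / (2 * Real.pi)
      = (∑ n ∈ Finset.Icc (-(N : ℤ)) (N : ℤ), fAux n y) + D N := by
    intro y N
    have h1 : ∑ n ∈ Finset.Icc (-(N : ℤ)) (N : ℤ), (1:ℝ) / (4 * Real.pi * ‖y + (n : ℝ) • e3‖)
        = ∑ n ∈ Finset.Icc (-(N : ℤ)) (N : ℤ), (fAux n y + cAux n) :=
      Finset.sum_congr rfl (fun n _ => (fAux_add_cAux n y).symm)
    rw [h1, Finset.sum_add_distrib, hDdef]
    ring
  have hD : Tendsto D atTop (𝓝 (K x₀ - S x₀)) := by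
    have h1 := hK x₀ hx₀
    have h3 : D = fun N : ℕ =>
        ((∑ n ∈ Finset.Icc (-(N : ℤ)) (N : ℤ), 1 / (4 * Real.pi * ‖x₀ + (n : ℝ) • e3‖))
          - Real.log N / (2 * Real.pi))
        - ∑ n ∈ Finset.Icc (-(N : ℤ)) (N : ℤ), fAux n x₀ :=
      funext fun N => by rw [hsplit x₀ N]; ring
    rw [h3]
    exact h1.sub (hpart x₀ hf0)
  have hKeq : ∀ y ∈ s, K y = S y + (K x₀ - S x₀) := by
    intro y hy
    have h1 := hK y (hy_ne y hy)
    have h2 := (hpart y (hsummf y hy)).add hD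
    have h3 : (fun N : ℕ => (∑ n ∈ Finset.Icc (-(N : ℤ)) (N : ℤ), fAux n y) + D N)
        = fun N : ℕ =>
          (∑ n ∈ Finset.Icc (-(N : ℤ)) (N : ℤ), 1 / (4 * Real.pi * ‖y + (n : ℝ) • e3‖))
            - Real.log N / (2 * Real.pi) :=
      funext fun N => (hsplit y N).symm
    rw [h3] at h2
    exact tendsto_nhds_unique h1 h2
  have hFK : HasFDerivAt K (∑' n : ℤ, f'Aux n x₀) x₀ := by
    have h4 : HasFDerivAt (fun y => S y + (K x₀ - S x₀)) (∑' n : ℤ, f'Aux n x₀) x₀ :=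
      keyDeriv.add_const _
    apply h4.congr_of_eventuallyEq
    filter_upwards [hsOpen.mem_nhds hx₀s] with y hy
    exact hKeq y hy
  -- first conjunct
  have hsum1 : Summable (fun n : ℤ =>
      ‖(4 * Real.pi * ‖x₀ + (n : ℝ) • e3‖ ^ 3)⁻¹ • (x₀ + (n : ℝ) • e3)‖) := by
    apply Summable.of_nonneg_of_le (fun n => norm_nonneg _) (fun n => ?_) hu
    have h5 : ‖(4 * Real.pi * ‖x₀ + (n : ℝ) • e3‖ ^ 3)⁻¹ • (x₀ + (n : ℝ) • e3)‖
        = ‖kGrad (x₀ + (n : ℝ) • e3)‖ := by rw [kGrad, norm_neg]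
    rw [h5, norm_kGrad]
    exact inv_bound (hb_pos n) (hlow x₀ hx₀s n)
  refine ⟨hsum1, ?_⟩
  -- second conjunct
  have hsum2 : Summable (fun n : ℤ => kGrad (x₀ + (n : ℝ) • e3)) := by
    apply Summable.of_norm
    have : ∀ n : ℤ, ‖kGrad (x₀ + (n : ℝ) • e3)‖
        = ‖(4 * Real.pi * ‖x₀ + (n : ℝ) • e3‖ ^ 3)⁻¹ • (x₀ + (n : ℝ) • e3)‖ := by
      intro n; rw [kGrad, norm_neg]
    simpa [this] using hsum1
  have hGeq : (∑' n : ℤ, -((4 * Real.pi * ‖x₀ + (n : ℝ) • e3‖ ^ 3)⁻¹ • (x₀ + (n : ℝ) • e3)))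
      = ∑' n : ℤ, kGrad (x₀ + (n : ℝ) • e3) := by
    simp only [kGrad]
  rw [hGeq]
  have hmap : toDual ℝ E3 (∑' n : ℤ, kGrad (x₀ + (n : ℝ) • e3)) = ∑' n : ℤ, f'Aux n x₀ := by
    have := ((toDual ℝ E3).toLinearIsometry.toContinuousLinearMap).map_tsum hsum2
    exact this
  have h6 : HasGradientAt K
      ((toDual ℝ E3).symm (toDual ℝ E3 (∑' n : ℤ, kGrad (x₀ + (n : ℝ) • e3)))) x₀ := by
    rw [hmap]
    exact hFK.hasGradientAt
  simpa using h6
end
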